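/- Let 0 < l < l*, let α : [0,l*] → ℝ³ be a C² unit-speed curve with unit tangent T = α′, let Q : [0,l*] → ℝ³ be a C¹ unit vector field orthogonal to T at every point, set κ_g = ⟨α″, Q⟩, let μ : [0,l*] → ℝ be C¹, and let β : [0,l*] × (−ε, ε) → ℝ³ be a C² map with β(σ, 0) = α(σ) and (∂β/∂t)(σ, 0) = μ(σ)·Q(σ) for all σ. Suppose λ : (−ε, ε) → (0, l*] is differentiable, λ(0) = l, and ∫₀^{λ(t)} ‖(∂β/∂σ)(σ, t)‖ dσ = l for all t ∈ (−ε, ε). Then dλ/dt at t = 0 equals ∫₀^l μ(s)·κ_g(s) ds. -/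

import Mathlib

open scoped RealInnerProductSpace
open Set

set_option maxHeartbeats 1000000 in
theorem deriv_length_parameter_of_variation
    (l lstar ε : ℝ) (hl : 0 < l) (hll : l < lstar) (hε : 0 < ε)
    (α Q : ℝ → EuclideanSpace ℝ (Fin 3)) (μ : ℝ → ℝ)
    (β : ℝ → ℝ → EuclideanSpace ℝ (Fin 3)) (lam : ℝ → ℝ)
    (hα : ContDiffOn ℝ 2 α (Set.Icc 0 lstar))
    (hunit : ∀ s ∈ Set.Icc (0:ℝ) lstar, ‖derivWithin α (Set.Icc 0 lstar) s‖ = 1)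
    (hQ : ContDiffOn ℝ 1 Q (Set.Icc 0 lstar))
    (hQunit : ∀ s ∈ Set.Icc (0:ℝ) lstar, ‖Q s‖ = 1)
    (hQperp : ∀ s ∈ Set.Icc (0:ℝ) lstar, ⟪derivWithin α (Set.Icc 0 lstar) s, Q s⟫ = 0)
    (hμ : ContDiffOn ℝ 1 μ (Set.Icc 0 lstar))
    (hβ : ContDiffOn ℝ 2 (fun p : ℝ × ℝ => β p.1 p.2)
      (Set.Icc 0 lstar ×ˢ Set.Ioo (-ε) ε))
    (hβ0 : ∀ σ ∈ Set.Icc (0:ℝ) lstar, β σ 0 = α σ)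
    (hβt : ∀ σ ∈ Set.Icc (0:ℝ) lstar, deriv (fun t => β σ t) 0 = μ σ • Q σ)
    (hlammem : ∀ t ∈ Set.Ioo (-ε) ε, lam t ∈ Set.Ioc (0:ℝ) lstar)
    (hlamdiff : DifferentiableOn ℝ lam (Set.Ioo (-ε) ε))
    (hlam0 : lam 0 = l)
    (hlen : ∀ t ∈ Set.Ioo (-ε) ε,
      ∫ σ in (0:ℝ)..(lam t), ‖derivWithin (fun s => β s t) (Set.Icc 0 lstar) σ‖ = l) :
    deriv lam 0 = ∫ s in (0:ℝ)..l,
      μ s * ⟪derivWithin (derivWithin α (Set.Icc 0 lstar)) (Set.Icc 0 lstar) s, Q s⟫ := by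
  have hlstar : (0:ℝ) < lstar := hl.trans hll
  set S : Set ℝ := Set.Icc 0 lstar with hSdef
  set I : Set ℝ := Set.Ioo (-ε) ε with hIdef
  set P : Set (ℝ × ℝ) := S ×ˢ I with hPdef
  set f : ℝ × ℝ → EuclideanSpace ℝ (Fin 3) := fun p => β p.1 p.2 with hfdef
  have hSu : UniqueDiffOn ℝ S := uniqueDiffOn_Icc hlstar
  have hIu : UniqueDiffOn ℝ I := isOpen_Ioo.uniqueDiffOn
  have hPu : UniqueDiffOn ℝ P := hSu.prod hIu
  have h0I : (0:ℝ) ∈ I := by constructor <;> linarith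
  have hlS : l ∈ S := ⟨hl.le, (le_of_lt hll)⟩
  set Df : ℝ × ℝ → (ℝ × ℝ) →L[ℝ] EuclideanSpace ℝ (Fin 3) :=
    fun p => fderivWithin ℝ f P p with hDfdef
  have hDf : ContDiffOn ℝ 1 Df P := hβ.fderivWithin hPu (by norm_num)
  have hfd : DifferentiableOn ℝ f P := hβ.differentiableOn (by norm_num)
  set c : ℝ × ℝ → EuclideanSpace ℝ (Fin 3) := fun p => Df p (1, 0) with hcdef
  have hc : ContDiffOn ℝ 1 c P := hDf.clm_apply contDiffOn_const
  set Dc : ℝ × ℝ → (ℝ × ℝ) →L[ℝ] EuclideanSpace ℝ (Fin 3) :=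
    fun p => fderivWithin ℝ c P p with hDcdef
  have hDcc : ContinuousOn Dc P := hc.continuousOn_fderivWithin hPu le_rfl
  set w : ℝ × ℝ → EuclideanSpace ℝ (Fin 3) := fun p => Dc p (0, 1) with hwdef
  have hIP : ∀ σ ∈ S, ∀ t ∈ I, ((σ, t) : ℝ × ℝ) ∈ P := fun σ hσ t ht => ⟨hσ, ht⟩
  -- σ-slice derivative of f
  have hslice : ∀ σ ∈ S, ∀ t ∈ I, HasDerivWithinAt (fun s => β s t) (c (σ, t)) S σ := by
    intro σ hσ t ht
    have hj : HasDerivWithinAt (fun s : ℝ => ((s, t) : ℝ × ℝ)) ((1:ℝ), (0:ℝ)) S σ :=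
      (HasDerivAt.prodMk (hasDerivAt_id σ) (hasDerivAt_const σ t)).hasDerivWithinAt
    have hmaps : Set.MapsTo (fun s : ℝ => ((s, t) : ℝ × ℝ)) S P := fun s hs => ⟨hs, ht⟩
    exact (hfd _ (hIP σ hσ t ht)).hasFDerivWithinAt.comp_hasDerivWithinAt σ hj hmaps
  have hdW : ∀ σ ∈ S, ∀ t ∈ I, derivWithin (fun s => β s t) S σ = c (σ, t) :=
    fun σ hσ t ht => (hslice σ hσ t ht).derivWithin (hSu σ hσ)
  set g : ℝ × ℝ → ℝ := fun p => ‖c p‖ with hgdef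
  have hgc : ContinuousOn g P := hc.continuousOn.norm
  have hT : ∀ σ ∈ S, c (σ, 0) = derivWithin α S σ := by
    intro σ hσ
    rw [← hdW σ hσ 0 h0I]
    exact derivWithin_congr hβ0 (hβ0 σ hσ)
  have hg0 : ∀ σ ∈ S, g (σ, 0) = 1 := by
    intro σ hσ
    simp only [hgdef, hT σ hσ, hunit σ hσ]
  -- t-slice derivatives
  have htsliceF : ∀ σ ∈ S, ∀ t ∈ I, HasDerivAt (fun τ => β σ τ) (Df (σ, t) (0, 1)) t := by
    intro σ hσ t ht
    have hj : HasDerivWithinAt (fun τ : ℝ => ((σ, τ) : ℝ × ℝ)) ((0:ℝ), (1:ℝ)) I t :=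
      (HasDerivAt.prodMk (hasDerivAt_const t σ) (hasDerivAt_id t)).hasDerivWithinAt
    have hmaps : Set.MapsTo (fun τ : ℝ => ((σ, τ) : ℝ × ℝ)) I P := fun τ hτ => ⟨hσ, hτ⟩
    exact ((hfd _ (hIP σ hσ t ht)).hasFDerivWithinAt.comp_hasDerivWithinAt t hj
      hmaps).hasDerivAt (isOpen_Ioo.mem_nhds ht)
  have hv : ∀ σ ∈ S, Df (σ, 0) (0, 1) = μ σ • Q σ := by
    intro σ hσ
    rw [← hβt σ hσ]
    exact ((htsliceF σ hσ 0 h0I).deriv).symm ▸ rfl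
  have htsliceC : ∀ σ ∈ S, ∀ t ∈ I, HasDerivAt (fun τ => c (σ, τ)) (w (σ, t)) t := by
    intro σ hσ t ht
    have hj : HasDerivWithinAt (fun τ : ℝ => ((σ, τ) : ℝ × ℝ)) ((0:ℝ), (1:ℝ)) I t :=
      (HasDerivAt.prodMk (hasDerivAt_const t σ) (hasDerivAt_id t)).hasDerivWithinAt
    have hmaps : Set.MapsTo (fun τ : ℝ => ((σ, τ) : ℝ × ℝ)) I P := fun τ hτ => ⟨hσ, hτ⟩
    exact ((hc.differentiableOn one_ne_zero _ (hIP σ hσ t ht)).hasFDerivWithinAt.comp_hasDerivWithinAt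
      t hj hmaps).hasDerivAt (isOpen_Ioo.mem_nhds ht)
  -- second derivative and symmetry
  set DDf : ℝ × ℝ → (ℝ × ℝ) →L[ℝ] (ℝ × ℝ) →L[ℝ] EuclideanSpace ℝ (Fin 3) :=
    fun p => fderivWithin ℝ Df P p with hDDfdef
  have hDfd : DifferentiableOn ℝ Df P := hDf.differentiableOn one_ne_zero
  have hPconv : Convex ℝ P := (convex_Icc _ _).prod (convex_Ioo _ _)
  have hPint : interior P = Set.Ioo 0 lstar ×ˢ I := by
    rw [hPdef, interior_prod_eq, interior_Icc, interior_Ioo]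
  have hsym : ∀ σ ∈ S, DDf (σ, 0) (0, 1) (1, 0) = DDf (σ, 0) (1, 0) (0, 1) := by
    intro σ hσ
    have hne : (interior P).Nonempty := by rw [hPint]; exact ⟨(l, 0), ⟨hl, hll⟩, h0I⟩
    have hf' : ∀ y ∈ interior P, HasFDerivAt f (Df y) y := fun y hy =>
      (hfd y (interior_subset hy)).hasFDerivWithinAt.hasFDerivAt
        (mem_nhds_iff.2 ⟨interior P, interior_subset, isOpen_interior, hy⟩)
    have hx' : HasFDerivWithinAt Df (DDf (σ, 0)) (interior P) (σ, 0) :=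
      ((hDfd _ (hIP σ hσ 0 h0I)).hasFDerivWithinAt).mono interior_subset
    exact hPconv.second_derivative_within_at_symmetric hne hf' (hIP σ hσ 0 h0I) hx' _ _
  -- Dc in terms of DDf
  have hDcDDf : ∀ p ∈ P, Dc p (0, 1) = DDf p (0, 1) (1, 0) := by
    intro p hp
    have h1 : HasFDerivWithinAt Df (DDf p) P p := (hDfd p hp).hasFDerivWithinAt
    have h2 : HasFDerivWithinAt c
        ((ContinuousLinearMap.apply ℝ (EuclideanSpace ℝ (Fin 3)) ((1:ℝ),(0:ℝ))).comp (DDf p)) P p :=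
      (ContinuousLinearMap.apply ℝ (EuclideanSpace ℝ (Fin 3))
        ((1:ℝ),(0:ℝ))).hasFDerivAt.comp_hasFDerivWithinAt p h1
    have h3 := h2.fderivWithin (hPu p hp)
    show fderivWithin ℝ c P p (0, 1) = DDf p (0, 1) (1, 0)
    rw [h3]; rfl
  -- derivative of σ ↦ Df (σ,0) (0,1) within S
  have hvd : ∀ σ ∈ S, HasDerivWithinAt (fun s => Df (s, 0) (0, 1))
      (DDf (σ, 0) (1, 0) (0, 1)) S σ := by
    intro σ hσ
    have hj : HasDerivWithinAt (fun s : ℝ => ((s, (0:ℝ)) : ℝ × ℝ)) ((1:ℝ), (0:ℝ)) S σ :=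
      (HasDerivAt.prodMk (hasDerivAt_id σ) (hasDerivAt_const σ (0:ℝ))).hasDerivWithinAt
    have hmaps : Set.MapsTo (fun s : ℝ => ((s, (0:ℝ)) : ℝ × ℝ)) S P := fun s hs => ⟨hs, h0I⟩
    have h1 : HasDerivWithinAt (fun s => Df (s, 0)) (DDf (σ, 0) (1, 0)) S σ :=
      (hDfd _ (hIP σ hσ 0 h0I)).hasFDerivWithinAt.comp_hasDerivWithinAt σ hj hmaps
    exact (ContinuousLinearMap.apply ℝ (EuclideanSpace ℝ (Fin 3))
      ((0:ℝ),(1:ℝ))).hasFDerivAt.comp_hasDerivWithinAt σ h1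
  -- identification of w (σ, 0)
  have hw0 : ∀ σ ∈ S, w (σ, 0) =
      μ σ • derivWithin Q S σ + derivWithin μ S σ • Q σ := by
    intro σ hσ
    have hμd : HasDerivWithinAt μ (derivWithin μ S σ) S σ :=
      ((hμ.differentiableOn one_ne_zero) σ hσ).hasDerivWithinAt
    have hQd : HasDerivWithinAt Q (derivWithin Q S σ) S σ :=
      ((hQ.differentiableOn one_ne_zero) σ hσ).hasDerivWithinAt
    have h1 : HasDerivWithinAt (fun s => μ s • Q s)
        (μ σ • derivWithin Q S σ + derivWithin μ S σ • Q σ) S σ := hμd.smul hQd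
    have h2 : HasDerivWithinAt (fun s => μ s • Q s) (DDf (σ, 0) (1, 0) (0, 1)) S σ :=
      (hvd σ hσ).congr (fun s hs => (hv s hs).symm) (hv σ hσ).symm
    have h3 := h1.derivWithin (hSu σ hσ)
    have h4 := h2.derivWithin (hSu σ hσ)
    rw [hwdef]
    show Dc (σ, 0) (0, 1) = _
    rw [hDcDDf _ (hIP σ hσ 0 h0I), hsym σ hσ, ← h4, h3]
  -- inner product identities
  set T : ℝ → EuclideanSpace ℝ (Fin 3) := derivWithin α S with hTdef
  set T' : ℝ → EuclideanSpace ℝ (Fin 3) := derivWithin T S with hT'def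
  have hTc : ContDiffOn ℝ 1 T S := hα.derivWithin hSu (by norm_num)
  have hTd : ∀ σ ∈ S, HasDerivWithinAt T (T' σ) S σ := fun σ hσ =>
    ((hTc.differentiableOn one_ne_zero) σ hσ).hasDerivWithinAt
  have hTQ' : ∀ σ ∈ S, ⟪T σ, derivWithin Q S σ⟫ = -⟪T' σ, Q σ⟫ := by
    intro σ hσ
    have hQd : HasDerivWithinAt Q (derivWithin Q S σ) S σ :=
      ((hQ.differentiableOn one_ne_zero) σ hσ).hasDerivWithinAt
    have h1 : HasDerivWithinAt (fun s => ⟪T s, Q s⟫)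
        (⟪T σ, derivWithin Q S σ⟫ + ⟪T' σ, Q σ⟫) S σ := (hTd σ hσ).inner ℝ hQd
    have h2 : HasDerivWithinAt (fun s => ⟪T s, Q s⟫) 0 S σ :=
      (hasDerivWithinAt_const σ S (0:ℝ)).congr (fun s hs => hQperp s hs) (hQperp σ hσ)
    have h3 := h1.derivWithin (hSu σ hσ)
    have h4 := h2.derivWithin (hSu σ hσ)
    have : ⟪T σ, derivWithin Q S σ⟫ + ⟪T' σ, Q σ⟫ = 0 := by rw [← h3, h4]
    linarith
  -- value of the t-derivative of the integrand at t = 0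
  have hF'0 : ∀ σ ∈ S, ⟪c (σ, 0), w (σ, 0)⟫ / g (σ, 0) = -(μ σ * ⟪T' σ, Q σ⟫) := by
    intro σ hσ
    rw [hg0 σ hσ, hw0 σ hσ, hT σ hσ]
    rw [inner_add_right, real_inner_smul_right, real_inner_smul_right]
    rw [hTQ' σ hσ, hQperp σ hσ]
    ring
  -- compactness facts
  set K : Set (ℝ × ℝ) := S ×ˢ Set.Icc (-(ε/2)) (ε/2) with hKdef
  have hKP : K ⊆ P := Set.prod_mono subset_rfl
    (Set.Icc_subset_Ioo (by linarith) (by linarith))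
  have hK : IsCompact K := isCompact_Icc.prod isCompact_Icc
  have hgK : UniformContinuousOn g K :=
    hK.uniformContinuousOn_of_continuous (hgc.mono hKP)
  have hUC : ∀ η : ℝ, 0 < η → ∃ δ : ℝ, 0 < δ ∧ δ ≤ ε / 2 ∧
      ∀ σ ∈ S, ∀ t : ℝ, |t| < δ → |g (σ, t) - 1| < η := by
    intro η hη
    rcases Metric.uniformContinuousOn_iff.1 hgK η hη with ⟨δ₀, hδ₀, hδ⟩
    refine ⟨min δ₀ (ε / 2), lt_min hδ₀ (by linarith), min_le_right _ _, ?_⟩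
    intro σ hσ t ht
    have htε : |t| ≤ ε / 2 := le_of_lt (lt_of_lt_of_le ht (min_le_right _ _))
    have h1 : ((σ, t) : ℝ × ℝ) ∈ K := ⟨hσ, abs_le.1 htε⟩
    have h2 : ((σ, 0) : ℝ × ℝ) ∈ K := ⟨hσ, by constructor <;> simp <;> linarith⟩
    have hd : dist ((σ, t) : ℝ × ℝ) ((σ, 0) : ℝ × ℝ) < δ₀ := by
      rw [Prod.dist_eq]
      simp only [dist_self, Real.dist_eq, sub_zero]
      have : |t| < δ₀ := lt_of_lt_of_le ht (min_le_left _ _)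
      exact max_lt hδ₀ this
    have := hδ _ h1 _ h2 hd
    rwa [Real.dist_eq, hg0 σ hσ] at this
  -- bound on w over K
  have hwcont : ContinuousOn w P := hDcc.clm_apply continuousOn_const
  obtain ⟨M, hM⟩ : ∃ M : ℝ, ∀ p ∈ K, ‖w p‖ ≤ M :=
    hK.exists_bound_of_continuousOn (hwcont.mono hKP)
  -- choice of δ
  obtain ⟨δ, hδpos, hδε, hδhalf⟩ := hUC (1/2) (by norm_num)
  have hmemI : ∀ t : ℝ, |t| < δ → t ∈ I := by
    intro t ht
    have := abs_lt.1 (lt_of_lt_of_le ht hδε)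
    exact ⟨by linarith [this.1], by linarith [this.2]⟩
  have hgpos : ∀ σ ∈ S, ∀ t : ℝ, |t| < δ → 1/2 < g (σ, t) := by
    intro σ hσ t ht
    have := abs_lt.1 (hδhalf σ hσ t ht)
    linarith [this.1]
  have hσS : ∀ σ : ℝ, σ ∈ Set.uIoc (0:ℝ) l → σ ∈ S := by
    intro σ hσ
    rw [Set.uIoc_of_le hl.le] at hσ
    exact ⟨hσ.1.le, hσ.2.trans hll.le⟩
  have hgslice : ∀ t ∈ I, ContinuousOn (fun σ => g (σ, t)) S := fun t ht =>
    hgc.comp ((continuous_id.prodMk continuous_const).continuousOn) (fun s hs => ⟨hs, ht⟩)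
  have huIccS : Set.uIcc (0:ℝ) l ⊆ S :=
    Set.uIcc_subset_Icc ⟨le_rfl, hlstar.le⟩ ⟨hl.le, hll.le⟩
  -- differentiation under the integral sign
  set F' : ℝ → ℝ → ℝ := fun t σ => ⟪c (σ, t), w (σ, t)⟫ / g (σ, t) with hF'def
  have key := intervalIntegral.hasDerivAt_integral_of_dominated_loc_of_deriv_le
    (F := fun t σ => g (σ, t)) (F' := F') (x₀ := (0:ℝ)) (a := (0:ℝ)) (b := l)
    (bound := fun _ => M) (μ := MeasureTheory.volume) (Metric.ball_mem_nhds (0:ℝ) hδpos)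
    ?hFmeas ?hFint ?hF'meas ?hbound ?hboundint ?hdiff
  case hFmeas =>
    filter_upwards [Metric.ball_mem_nhds (0:ℝ) hδpos] with t ht
    have htI : t ∈ I := hmemI t (by simpa [Real.dist_eq] using ht)
    exact (((hgslice t htI).mono (Set.uIoc_subset_uIcc.trans huIccS))).aestronglyMeasurable
      measurableSet_uIoc
  case hFint =>
    exact ((hgslice 0 h0I).mono huIccS).intervalIntegrable
  case hF'meas =>
    have h1 : ContinuousOn (fun σ => F' 0 σ) S := by
      have hcc : ContinuousOn (fun σ : ℝ => c (σ, 0)) S :=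
        hc.continuousOn.comp ((continuous_id.prodMk continuous_const).continuousOn)
          (fun s hs => ⟨hs, h0I⟩)
      have hwc : ContinuousOn (fun σ : ℝ => w (σ, 0)) S :=
        hwcont.comp ((continuous_id.prodMk continuous_const).continuousOn)
          (fun s hs => ⟨hs, h0I⟩)
      exact (hcc.inner hwc).div ((hgslice 0 h0I)) (fun σ hσ => by rw [hg0 σ hσ]; norm_num)
    exact ((h1.mono (Set.uIoc_subset_uIcc.trans huIccS))).aestronglyMeasurable
      measurableSet_uIoc
  case hbound =>
    refine Filter.Eventually.of_forall ?_
    intro σ hσ t ht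
    have htδ : |t| < δ := by simpa [Real.dist_eq] using ht
    have hσS' := hσS σ hσ
    have hgt : 1/2 < g (σ, t) := hgpos σ hσS' t htδ
    have hKmem : ((σ, t) : ℝ × ℝ) ∈ K :=
      ⟨hσS', abs_le.1 ((le_of_lt htδ).trans hδε)⟩
    have h2 : |⟪c (σ, t), w (σ, t)⟫| ≤ g (σ, t) * ‖w (σ, t)‖ := abs_real_inner_le_norm _ _
    have h3 : ‖w (σ, t)‖ ≤ M := hM _ hKmem
    have h4 : |F' t σ| ≤ ‖w (σ, t)‖ := by
      rw [hF'def, abs_div, abs_of_pos (by linarith : (0:ℝ) < g (σ, t))]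
      rw [div_le_iff₀ (by linarith : (0:ℝ) < g (σ, t))]
      calc |⟪c (σ, t), w (σ, t)⟫| ≤ g (σ, t) * ‖w (σ, t)‖ := h2
        _ = ‖w (σ, t)‖ * g (σ, t) := by ring
    exact (h4.trans h3)
  case hboundint => exact intervalIntegrable_const
  case hdiff =>
    refine Filter.Eventually.of_forall ?_
    intro σ hσ t ht
    have htδ : |t| < δ := by simpa [Real.dist_eq] using ht
    have hσS' := hσS σ hσ
    have htI : t ∈ I := hmemI t htδ
    have hgt : 1/2 < g (σ, t) := hgpos σ hσS' t htδ
    have hcd := htsliceC σ hσS' t htI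
    have hq : HasDerivAt (fun τ => ⟪c (σ, τ), c (σ, τ)⟫)
        (⟪c (σ, t), w (σ, t)⟫ + ⟪w (σ, t), c (σ, t)⟫) t := hcd.inner ℝ hcd
    have hqpos : (0:ℝ) < ⟪c (σ, t), c (σ, t)⟫ := by
      rw [real_inner_self_eq_norm_mul_norm]
      have : (0:ℝ) < ‖c (σ, t)‖ := by exact lt_of_lt_of_le (by norm_num) hgt.le
      positivity
    have hsq := (Real.hasDerivAt_sqrt (ne_of_gt hqpos)).comp t hq
    have hsqrtc : Real.sqrt ⟪c (σ, t), c (σ, t)⟫ = g (σ, t) := by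
      rw [real_inner_self_eq_norm_mul_norm, Real.sqrt_mul_self (norm_nonneg _)]
    have heq : (fun τ => Real.sqrt ⟪c (σ, τ), c (σ, τ)⟫) = fun τ => g (σ, τ) := by
      funext τ
      rw [real_inner_self_eq_norm_mul_norm, Real.sqrt_mul_self (norm_nonneg _)]
    have hval : 1 / (2 * Real.sqrt ⟪c (σ, t), c (σ, t)⟫) *
        (⟪c (σ, t), w (σ, t)⟫ + ⟪w (σ, t), c (σ, t)⟫) = F' t σ := by
      have haux : ∀ x G : ℝ, G ≠ 0 → 1 / (2 * G) * (x + x) = x / G := by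
        intro x G hG; field_simp; ring
      have h1 : ⟪w (σ, t), c (σ, t)⟫ = ⟪c (σ, t), w (σ, t)⟫ := real_inner_comm _ _
      show _ = ⟪c (σ, t), w (σ, t)⟫ / g (σ, t)
      rw [hsqrtc, h1]
      exact haux ⟪c (σ, t), w (σ, t)⟫ (g (σ, t)) (by linarith)
    have hsq' : HasDerivAt (fun τ => Real.sqrt ⟪c (σ, τ), c (σ, τ)⟫)
        (1 / (2 * Real.sqrt ⟪c (σ, t), c (σ, t)⟫) *
          (⟪c (σ, t), w (σ, t)⟫ + ⟪w (σ, t), c (σ, t)⟫)) t := hsq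
    rw [heq, hval] at hsq'
    exact hsq'
  obtain ⟨-, hΦ⟩ := key
  set D : ℝ := ∫ σ in (0:ℝ)..l, F' 0 σ with hDdef
  set ψ : ℝ → ℝ := fun t => ∫ σ in l..(lam t), g (σ, t) with hψdef
  have hintS : ∀ t ∈ I, ∀ a b : ℝ, a ∈ S → b ∈ S →
      IntervalIntegrable (fun σ => g (σ, t)) MeasureTheory.volume a b := fun t ht a b ha hb =>
    ((hgslice t ht).mono (Set.uIcc_subset_Icc ha hb)).intervalIntegrable
  have hlamS : ∀ t ∈ I, lam t ∈ S := fun t ht => ⟨(hlammem t ht).1.le, (hlammem t ht).2⟩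
  have hψeq : ∀ t ∈ I, ψ t = l - ∫ σ in (0:ℝ)..l, g (σ, t) := by
    intro t ht
    have h1 := hintS t ht 0 l ⟨le_rfl, hlstar.le⟩ hlS
    have h2 := hintS t ht l (lam t) hlS (hlamS t ht)
    have h3 : ((∫ σ in (0:ℝ)..l, g (σ, t)) + ∫ σ in l..(lam t), g (σ, t))
        = ∫ σ in (0:ℝ)..(lam t), g (σ, t) :=
      intervalIntegral.integral_add_adjacent_intervals h1 h2
    have h4 : (∫ σ in (0:ℝ)..(lam t), g (σ, t)) = l := by
      rw [← hlen t ht]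
      apply intervalIntegral.integral_congr
      intro σ hσ
      have hσS'' : σ ∈ S := Set.uIcc_subset_Icc ⟨le_rfl, hlstar.le⟩ (hlamS t ht) hσ
      exact congrArg Norm.norm (hdW σ hσS'' t ht).symm
    rw [hψdef]
    dsimp only
    linarith [h3, h4]
  have hψd1 : HasDerivAt ψ (-D) 0 := by
    have h5 : HasDerivAt (fun t => l - ∫ σ in (0:ℝ)..l, g (σ, t)) (-D) 0 := hΦ.const_sub l
    have h6 : ψ =ᶠ[nhds 0] (fun t => l - ∫ σ in (0:ℝ)..l, g (σ, t)) :=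
      Filter.eventuallyEq_of_mem (isOpen_Ioo.mem_nhds h0I) hψeq
    exact h5.congr_of_eventuallyEq h6
  have hlamd : HasDerivAt lam (deriv lam 0) 0 :=
    (hlamdiff.differentiableAt (isOpen_Ioo.mem_nhds h0I)).hasDerivAt
  set L : ℝ := deriv lam 0 with hLdef
  have hψd2 : HasDerivAt ψ L 0 := by
    have hψ0 : ψ 0 = 0 := by
      rw [hψdef]
      dsimp only
      rw [hlam0, intervalIntegral.integral_same]
    have h₁ : (fun t => lam t - l - t * L) =o[nhds 0] (fun t : ℝ => t) := by
      have := hasDerivAt_iff_isLittleO.1 hlamd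
      simpa [hlam0] using this
    have h₂ : (fun t => ψ t - (lam t - l)) =o[nhds 0] (fun t : ℝ => t) := by
      rw [Asymptotics.isLittleO_iff]
      intro C hC
      obtain ⟨C₀, hC₀pos, hbig⟩ := (hlamd.isBigO_sub).exists_pos
      have hbig' : ∀ᶠ t in nhds 0, ‖lam t - l‖ ≤ C₀ * ‖t‖ := by
        have := hbig.bound
        simpa [hlam0] using this
      obtain ⟨δ₁, hδ₁pos, hδ₁ε, hδ₁⟩ := hUC (C / C₀) (by positivity)
      filter_upwards [Metric.ball_mem_nhds (0:ℝ) hδ₁pos, isOpen_Ioo.mem_nhds h0I, hbig']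
        with t htb htI hbd
      have htδ : |t| < δ₁ := by simpa [Real.dist_eq] using htb
      have hlam_t := hlamS t htI
      have hi2 := hintS t htI l (lam t) hlS hlam_t
      have he : ψ t - (lam t - l) = ∫ σ in l..(lam t), (g (σ, t) - 1) := by
        rw [intervalIntegral.integral_sub hi2 intervalIntegrable_const,
          intervalIntegral.integral_const]
        rw [hψdef]
        dsimp only
        ring_nf
      have hb : ∀ σ ∈ Set.uIoc l (lam t), ‖g (σ, t) - 1‖ ≤ C / C₀ := by
        intro σ hσ
        have hσS'' : σ ∈ S := Set.uIcc_subset_Icc hlS hlam_t (Set.uIoc_subset_uIcc hσ)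
        exact (hδ₁ σ hσS'' t htδ).le
      have h6 := intervalIntegral.norm_integral_le_of_norm_le_const hb
      rw [← he] at h6
      calc ‖ψ t - (lam t - l)‖ ≤ C / C₀ * |lam t - l| := h6
        _ ≤ C / C₀ * (C₀ * ‖t‖) := by
            apply mul_le_mul_of_nonneg_left _ (by positivity)
            simpa using hbd
        _ = C * ‖t‖ := by field_simp
    have h4 : (fun t => ψ t - t * L) =o[nhds 0] (fun t : ℝ => t) := by
      have h3 := h₁.add h₂
      have heq : (fun t => (lam t - l - t * L) + (ψ t - (lam t - l)))
          = fun t => ψ t - t * L := funext fun t => by ring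
      rwa [heq] at h3
    rw [hasDerivAt_iff_isLittleO]
    simpa [hψ0, smul_eq_mul] using h4
  have hLD : L = -D := hψd2.unique hψd1
  rw [hLD]
  have h7 : -D = ∫ σ in (0:ℝ)..l, -(F' 0 σ) := by
    rw [intervalIntegral.integral_neg]
  rw [h7]
  apply intervalIntegral.integral_congr
  intro σ hσ
  have hσS'' : σ ∈ S := huIccS hσ
  have h8 := hF'0 σ hσS''
  show -(⟪c (σ, 0), w (σ, 0)⟫ / g (σ, 0)) = _
  rw [h8, neg_neg]
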